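/- The improper integral ∫₀^∞ dt/√(1+t⁴) converges and equals Γ(1/4)·Γ(5/4)/√π, where Γ is the Gamma function. -/

import Mathlib

open Real MeasureTheory Set

noncomputable def phi (x : ℝ) : ℝ := (x / (1 - x)) ^ ((1/4 : ℝ))
noncomputable def phi' (x : ℝ) : ℝ := (1/(1-x)^2) * ((1/4 : ℝ)) * (x/(1-x)) ^ ((1/4 : ℝ) - 1)

lemma phi_hasDeriv {x : ℝ} (hx : x ∈ Ioo (0:ℝ) 1) :
    HasDerivAt phi (phi' x) x := by
  obtain ⟨h0, h1⟩ := hx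
  have h1x : (0:ℝ) < 1 - x := by linarith
  have hu : HasDerivAt (fun y : ℝ => y / (1 - y)) (1/(1-x)^2) x := by
    have : HasDerivAt (fun y : ℝ => y / (1 - y)) ((1 * (1 - x) - x * (0 - 1)) / (1 - x) ^ 2) x :=
      (hasDerivAt_id x).div ((hasDerivAt_const x (1:ℝ)).sub (hasDerivAt_id x)) h1x.ne'
    convert this using 1
    ring
  have h := hu.rpow_const (p := (1/4:ℝ)) (Or.inl (by positivity))
  rw [show phi = fun y : ℝ => (y / (1 - y)) ^ ((1/4:ℝ)) from rfl]
  convert h using 1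
  rfl

lemma phi_pow4 {x : ℝ} (hx : x ∈ Ioo (0:ℝ) 1) : phi x ^ 4 = x / (1 - x) := by
  obtain ⟨h0, h1⟩ := hx
  have h1x : (0:ℝ) < 1 - x := by linarith
  have hu : (0:ℝ) ≤ x / (1 - x) := by positivity
  rw [phi, ← Real.rpow_natCast ((x / (1-x)) ^ ((1/4:ℝ))) 4, ← Real.rpow_mul hu]
  norm_num

lemma phi_inj : InjOn phi (Ioo 0 1) := by
  intro a ha b hb h
  have h4 : a / (1 - a) = b / (1 - b) := by
    rw [← phi_pow4 ha, ← phi_pow4 hb, h]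
  obtain ⟨ha0, ha1⟩ := ha; obtain ⟨hb0, hb1⟩ := hb
  have h1a : (0:ℝ) < 1 - a := by linarith
  have h1b : (0:ℝ) < 1 - b := by linarith
  field_simp at h4
  nlinarith

lemma phi_image : phi '' (Ioo 0 1) = Ioi 0 := by
  apply Subset.antisymm
  · rintro _ ⟨x, ⟨h0, h1⟩, rfl⟩
    have h1x : (0:ℝ) < 1 - x := by linarith
    have : (0:ℝ) < x / (1 - x) := by positivity
    exact Real.rpow_pos_of_pos this _
  · rintro t (ht : 0 < t)
    refine ⟨t^4 / (1 + t^4), ⟨by positivity, ?_⟩, ?_⟩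
    · rw [div_lt_one (by positivity)]; linarith
    · have hden : (0:ℝ) < 1 + t^4 := by positivity
      have : t^4 / (1 + t^4) / (1 - t^4 / (1 + t^4)) = t^4 := by
        field_simp
        ring
      rw [phi, this, ← Real.rpow_natCast t 4, ← Real.rpow_mul ht.le]
      norm_num

lemma key_pointwise {x : ℝ} (hx : x ∈ Ioo (0:ℝ) 1) :
    |phi' x| * (1 / Real.sqrt (1 + phi x ^ 4))
      = (1/4) * (x ^ (-(3/4) : ℝ) * (1 - x) ^ (-(3/4) : ℝ)) := by
  obtain ⟨h0, h1⟩ := hx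
  have h1x : (0:ℝ) < 1 - x := by linarith
  have hu : (0:ℝ) < x / (1 - x) := by positivity
  have habs : |phi' x| = phi' x := abs_of_nonneg (by rw [phi']; positivity)
  have h4 : (1:ℝ) + phi x ^ 4 = (1 - x)⁻¹ := by
    rw [phi_pow4 ⟨h0, h1⟩]; field_simp; ring
  rw [habs, h4, Real.sqrt_inv, one_div, inv_inv, phi']
  have hsq : Real.sqrt (1 - x) = (1 - x) ^ ((1/2 : ℝ)) := Real.sqrt_eq_rpow _
  have hdiv : (x / (1 - x)) ^ ((1/4 : ℝ) - 1) = x ^ (-(3/4):ℝ) * (1 - x) ^ ((3/4):ℝ) := by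
    rw [div_eq_mul_inv, Real.mul_rpow h0.le (by positivity), Real.inv_rpow h1x.le,
      ← Real.rpow_neg h1x.le]
    norm_num
  have hinv : (1/(1-x)^2 : ℝ) = (1 - x) ^ ((-2 : ℝ)) := by
    have h2 : ((1-x):ℝ) ^ ((-2:ℝ)) = ((1-x) ^ (((2:ℕ)):ℝ))⁻¹ := by
      rw [← Real.rpow_neg h1x.le]; norm_num
    rw [h2, Real.rpow_natCast, one_div]
  rw [hsq, hdiv, hinv]
  rw [show (1-x) ^ ((-2:ℝ)) * (1/4 : ℝ) * (x ^ (-(3/4):ℝ) * (1-x) ^ ((3/4):ℝ)) * (1-x) ^ ((1/2:ℝ))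
    = (1/4) * (x ^ (-(3/4):ℝ) * ((1-x) ^ ((-2:ℝ)) * (1-x) ^ ((3/4):ℝ) * (1-x) ^ ((1/2:ℝ)))) by ring]
  rw [← Real.rpow_add h1x, ← Real.rpow_add h1x]
  norm_num

noncomputable def betaf (x : ℝ) : ℝ := x ^ (-(3/4):ℝ) * (1-x) ^ (-(3/4):ℝ)

lemma betaf_eq {x : ℝ} (hx : x ∈ Icc (0:ℝ) 1) :
    ((betaf x : ℝ) : ℂ) = (x:ℂ) ^ ((1/4:ℂ) - 1) * ((1:ℂ) - x) ^ ((1/4:ℂ) - 1) := by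
  obtain ⟨h0, h1⟩ := hx
  have h1x : (0:ℝ) ≤ 1 - x := by linarith
  rw [betaf, Complex.ofReal_mul, Complex.ofReal_cpow h0, Complex.ofReal_cpow h1x]
  push_cast
  norm_num

lemma betaf_integral :
    ∫ x in (0:ℝ)..1, betaf x = Real.Gamma (1/4) * Real.Gamma (1/4) / Real.sqrt Real.pi := by
  have hB := Complex.Gamma_mul_Gamma_eq_betaIntegral (s := 1/4) (t := 1/4)
    (by norm_num) (by norm_num)
  have h1 : Complex.betaIntegral (1/4) (1/4) = ((∫ x in (0:ℝ)..1, betaf x : ℝ) : ℂ) := by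
    rw [Complex.betaIntegral, ← intervalIntegral.integral_ofReal]
    refine intervalIntegral.integral_congr fun x hx => ?_
    rw [uIcc_of_le (by norm_num : (0:ℝ) ≤ 1)] at hx
    exact (betaf_eq hx).symm
  rw [h1, show (1/4 + 1/4 : ℂ) = ((1/2:ℝ):ℂ) by norm_num,
    show (1/4 : ℂ) = ((1/4:ℝ):ℂ) by norm_num, Complex.Gamma_ofReal, Complex.Gamma_ofReal,
    ← Complex.ofReal_mul, ← Complex.ofReal_mul] at hB
  have hr := Complex.ofReal_injective hB
  have hpi : Real.sqrt Real.pi ≠ 0 := by positivity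
  rw [Real.Gamma_one_half_eq] at hr
  rw [eq_div_iff hpi]
  linarith [hr]

lemma betaf_integrableOn : IntegrableOn betaf (Ioo (0:ℝ) 1) := by
  have h := Complex.betaIntegral_convergent (u := 1/4) (v := 1/4) (by norm_num) (by norm_num)
  have h2 : IntegrableOn (fun x : ℝ => (x:ℂ) ^ ((1/4:ℂ)-1) * (1 - (x:ℂ)) ^ ((1/4:ℂ)-1))
      (Ioo (0:ℝ) 1) := h.1.mono_set Ioo_subset_Ioc_self
  refine MeasureTheory.IntegrableOn.congr_fun h2.re (fun x hx => ?_) measurableSet_Ioo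
  have := betaf_eq (Ioo_subset_Icc_self hx)
  rw [← this]; exact Complex.ofReal_re _

theorem integral_one_div_sqrt_one_add_pow_four :
    IntegrableOn (fun t : ℝ => 1 / Real.sqrt (1 + t ^ 4)) (Ioi 0) ∧
    ∫ t in Ioi (0:ℝ), 1 / Real.sqrt (1 + t ^ 4)
      = Real.Gamma (1/4) * Real.Gamma (5/4) / Real.sqrt Real.pi := by
  have hmeas : MeasurableSet (Ioo (0:ℝ) 1) := measurableSet_Ioo
  have hderiv : ∀ x ∈ Ioo (0:ℝ) 1, HasDerivWithinAt phi (phi' x) (Ioo 0 1) x :=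
    fun x hx => (phi_hasDeriv hx).hasDerivWithinAt
  set g : ℝ → ℝ := fun t => 1 / Real.sqrt (1 + t ^ 4) with hg
  have himg : Ioi (0:ℝ) = phi '' (Ioo 0 1) := phi_image.symm
  have heq : EqOn (fun x => |phi' x| • g (phi x)) (fun x => (1/4) * betaf x) (Ioo 0 1) := by
    intro x hx
    simpa [hg, smul_eq_mul, betaf, mul_assoc] using key_pointwise hx
  have hint : IntegrableOn (fun x => |phi' x| • g (phi x)) (Ioo 0 1) :=
    MeasureTheory.IntegrableOn.congr_fun (betaf_integrableOn.const_mul (1/4)) (fun x hx => (heq hx).symm) hmeas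
  constructor
  · rw [himg]
    exact (integrableOn_image_iff_integrableOn_abs_deriv_smul hmeas hderiv phi_inj g).mpr hint
  · rw [himg, integral_image_eq_integral_abs_deriv_smul hmeas hderiv phi_inj g,
      setIntegral_congr_fun hmeas heq, MeasureTheory.integral_const_mul]
    have hIoo : ∫ x in Ioo (0:ℝ) 1, betaf x = ∫ x in (0:ℝ)..1, betaf x := by
      rw [intervalIntegral.integral_of_le (by norm_num : (0:ℝ) ≤ 1),
        MeasureTheory.integral_Ioc_eq_integral_Ioo]
    have h54 : Real.Gamma (5/4) = (1/4) * Real.Gamma (1/4) := by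
      rw [show (5/4:ℝ) = 1/4 + 1 by norm_num, Real.Gamma_add_one (by norm_num : (1/4:ℝ) ≠ 0)]
    rw [hIoo, betaf_integral, h54]
    ring
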